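/- arXiv:2305.15493 — 3 statements merged into one kernel-verified Lean document; each statement's English description precedes it below -/
import Mathlib

section
/- Let p be a prime, k a positive integer, and f ∈ ℤ[X] a polynomial of degree k with nonzero discriminant and content coprime to p. Then for every j ≥ 1, the number of roots of f modulo p^j satisfies ρ_f(p^j) ≤ k · min(p^{j(1-1/k)}, p^{j-1}). -/
open Polynomial

/-- Number of roots of `f` modulo `m`. -/
def rho (f : Polynomial ℤ) (m : ℕ) : ℕ :=
  ((Finset.range m).filter (fun n : ℕ => (m : ℤ) ∣ f.eval (n : ℤ))).card

/-- The discriminant of an integer polynomial, computed via its complex roots: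
`Δ_f = lc^(2k-2) ∏_{i<j} (α_i - α_j)^2 = (-1)^{k(k-1)/2} lc^(2k-2) ∏_{i≠j} (α_i - α_j)`. -/
noncomputable def disc (f : Polynomial ℤ) : ℂ :=
  (-1) ^ (f.natDegree * (f.natDegree - 1) / 2) *
    (f.leadingCoeff : ℂ) ^ (2 * f.natDegree - 2) *
      ∏ p ∈ (Finset.univ :
          Finset (Fin ((f.map (Int.castRingHom ℂ)).roots.toList.length))).offDiag,
        ((f.map (Int.castRingHom ℂ)).roots.toList.get p.1 -
          (f.map (Int.castRingHom ℂ)).roots.toList.get p.2)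

section Aux
open Finset

/-- Key lemma: a primitive polynomial of degree ≤ k cannot have k+1 roots mod p^j
that are pairwise incongruent mod p^t, when k*(t-1) < j. -/
lemma key_lemma (p : ℕ) (hp : p.Prime) (k t j : ℕ) (hk : 1 ≤ k)
    (hlt : k * (t - 1) < j)
    (f : Polynomial ℤ) (hdeg : f.natDegree ≤ k)
    (hcont : Int.gcd f.content p = 1)
    (n : Fin (k + 1) → ℤ) (hroot : ∀ i, (p : ℤ) ^ j ∣ f.eval (n i))
    (hincong : ∀ i l, i ≠ l → ¬ ((p : ℤ) ^ t ∣ n i - n l)) : False := by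
  haveI : Fact p.Prime := ⟨hp⟩
  set K := ℚ_[p]
  -- the nodes are pairwise distinct
  have hne : ∀ i l : Fin (k + 1), i ≠ l → n i ≠ n l := by
    intro i l h hnl
    exact hincong i l h (by simp [hnl])
  set v : Fin (k + 1) → K := fun i => ((n i : ℤ) : K) with hv
  have hvinj : Set.InjOn v (Finset.univ : Finset (Fin (k + 1))) := by
    intro i _ l _ h
    by_contra hil
    exact hne i l hil (Int.cast_injective h)
  set F : Polynomial K := f.map (Int.castRingHom K) with hF
  have hdegF : F.degree < ((Finset.univ : Finset (Fin (k + 1))).card : ℕ) := by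
    rw [Finset.card_univ, Fintype.card_fin]
    refine lt_of_le_of_lt (Polynomial.degree_map_le) (lt_of_le_of_lt Polynomial.degree_le_natDegree ?_)
    exact_mod_cast Nat.lt_succ_of_le hdeg
  have hinterp := Lagrange.eq_interpolate (v := v) hvinj hdegF
  -- a coefficient not divisible by p
  have hcoeff : ∃ m, ¬ ((p : ℤ) ∣ f.coeff m) := by
    by_contra h
    push_neg at h
    have h1 : (p : ℤ) ∣ f.content := Finset.dvd_gcd (fun i _ => h i)
    have h2 : (p : ℤ) ∣ (Int.gcd f.content p : ℤ) :=
      Int.dvd_coe_gcd h1 dvd_rfl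
    rw [hcont] at h2
    have h3 := Int.le_of_dvd one_pos h2
    have h4 := hp.two_le
    omega
  obtain ⟨m, hm⟩ := hcoeff
  have hnorm1 : (1 : ℝ) ≤ ‖F.coeff m‖ := by
    rw [hF, Polynomial.coeff_map]
    by_contra h
    push_neg at h
    exact hm ((Padic.norm_intCast_lt_one_iff).mp h)
  -- coefficient as a sum
  have hsum : F.coeff m = ∑ i : Fin (k + 1),
      F.eval (v i) * (Lagrange.basis Finset.univ v i).coeff m := by
    conv_lhs => rw [hinterp]
    rw [Lagrange.interpolate_apply, Polynomial.finset_sum_coeff]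
    exact Finset.sum_congr rfl fun i _ => by rw [Polynomial.coeff_C_mul]
  obtain ⟨i, -, hile⟩ := IsUltrametricDist.exists_norm_finset_sum_le_of_nonempty
    (Finset.univ_nonempty) (fun i : Fin (k+1) => F.eval (v i) * (Lagrange.basis Finset.univ v i).coeff m)
  rw [← hsum] at hile
  -- the basis polynomial coefficient
  set d : ℤ := ∏ l ∈ Finset.univ.erase i, (n i - n l) with hd
  have hdne : d ≠ 0 := by
    rw [hd]
    refine Finset.prod_ne_zero_iff.mpr fun l hl => ?_
    have : i ≠ l := fun h => (Finset.mem_erase.mp hl).1 h.symm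
    exact sub_ne_zero_of_ne (hne i l this)
  set g : Polynomial ℤ := ∏ l ∈ Finset.univ.erase i, (X - C (n l)) with hg
  have hbasis : Lagrange.basis Finset.univ v i =
      Polynomial.C ((d : K))⁻¹ * g.map (Int.castRingHom K) := by
    rw [Lagrange.basis]
    simp only [Lagrange.basisDivisor]
    rw [Finset.prod_mul_distrib]
    congr 1
    · rw [← map_prod (Polynomial.C : K →+* Polynomial K), Finset.prod_inv_distrib]
      congr 2
      rw [hd]
      push_cast
      rfl
    · rw [hg, Polynomial.map_prod]
      refine Finset.prod_congr rfl fun l _ => ?_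
      rw [Polynomial.map_sub, Polynomial.map_X, Polynomial.map_C]
      rfl
  have hbnorm : ‖(Lagrange.basis Finset.univ v i).coeff m‖ ≤ ‖(d : K)‖⁻¹ := by
    rw [hbasis, Polynomial.coeff_C_mul, norm_mul, norm_inv]
    have h1 : ‖(g.map (Int.castRingHom K)).coeff m‖ ≤ 1 := by
      rw [Polynomial.coeff_map]
      exact Padic.norm_int_le_one _
    calc ‖(d : K)‖⁻¹ * ‖(g.map (Int.castRingHom K)).coeff m‖
        ≤ ‖(d : K)‖⁻¹ * 1 := by
          exact mul_le_mul_of_nonneg_left h1 (by positivity)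
      _ = ‖(d : K)‖⁻¹ := mul_one _
  have hevalnorm : ‖F.eval (v i)‖ ≤ (p : ℝ) ^ (-(j : ℤ)) := by
    rw [hF, hv]
    rw [Polynomial.eval_intCast_map]
    refine (Padic.norm_int_le_pow_iff_dvd _ _).mpr ?_
    exact_mod_cast hroot i
  have hdpos : (0 : ℝ) < ‖(d : K)‖ := by
    rw [norm_pos_iff]
    exact_mod_cast hdne
  have hdnorm : ‖(d : K)‖ ≤ (p : ℝ) ^ (-(j : ℤ)) := by
    have h1 : (1 : ℝ) ≤ ‖F.eval (v i)‖ * ‖(d : K)‖⁻¹ := by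
      calc (1 : ℝ) ≤ ‖F.coeff m‖ := hnorm1
        _ ≤ ‖F.eval (v i) * (Lagrange.basis Finset.univ v i).coeff m‖ := hile
        _ = ‖F.eval (v i)‖ * ‖(Lagrange.basis Finset.univ v i).coeff m‖ := norm_mul _ _
        _ ≤ ‖F.eval (v i)‖ * ‖(d : K)‖⁻¹ :=
            mul_le_mul_of_nonneg_left hbnorm (norm_nonneg _)
    calc ‖(d : K)‖ = 1 * ‖(d : K)‖ := (one_mul _).symm
      _ ≤ (‖F.eval (v i)‖ * ‖(d : K)‖⁻¹) * ‖(d : K)‖ :=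
          mul_le_mul_of_nonneg_right h1 (le_of_lt hdpos)
      _ = ‖F.eval (v i)‖ * (‖(d : K)‖⁻¹ * ‖(d : K)‖) := by ring
      _ = ‖F.eval (v i)‖ := by rw [inv_mul_cancel₀ (ne_of_gt hdpos), mul_one]
      _ ≤ (p : ℝ) ^ (-(j : ℤ)) := hevalnorm
  have hdvd : (p : ℤ) ^ j ∣ d := by
    have := (Padic.norm_int_le_pow_iff_dvd d j).mp hdnorm
    exact_mod_cast this
  -- now the valuation count
  have hdvdnat : p ^ j ∣ d.natAbs := by
    have h := Int.natAbs_dvd_natAbs.mpr hdvd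
    rwa [Int.natAbs_pow, Int.natAbs_natCast] at h
  have hnatabs : d.natAbs = ∏ l ∈ Finset.univ.erase i, (n i - n l).natAbs := by
    rw [hd]
    exact map_prod Int.natAbsHom _ _
  have hfacne : ∀ l ∈ Finset.univ.erase i, (n i - n l).natAbs ≠ 0 := by
    intro l hl
    have : i ≠ l := fun h => (Finset.mem_erase.mp hl).1 h.symm
    simpa using sub_ne_zero_of_ne (hne i l this)
  have hprodne : d.natAbs ≠ 0 := by simpa using hdne
  have hjle : j ≤ (d.natAbs).factorization p :=
    (Nat.Prime.pow_dvd_iff_le_factorization hp hprodne).mp hdvdnat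
  have hfacsum : (d.natAbs).factorization p =
      ∑ l ∈ Finset.univ.erase i, ((n i - n l).natAbs).factorization p := by
    rw [hnatabs, Nat.factorization_prod hfacne]
    simp [Finsupp.finset_sum_apply]
  have hfacbd : ∀ l ∈ Finset.univ.erase i, ((n i - n l).natAbs).factorization p ≤ t - 1 := by
    intro l hl
    have hil : i ≠ l := fun h => (Finset.mem_erase.mp hl).1 h.symm
    by_contra h
    push_neg at h
    have ht : t ≤ ((n i - n l).natAbs).factorization p := by omega
    have : p ^ t ∣ (n i - n l).natAbs :=
      (Nat.Prime.pow_dvd_iff_le_factorization hp (hfacne l hl)).mpr ht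
    refine hincong i l hil ?_
    have := Int.natAbs_dvd.mpr (Int.natCast_dvd_natCast.mpr this)
    simpa using this
  have hcard : (Finset.univ.erase i).card = k := by
    simp
  have : j ≤ k * (t - 1) := by
    calc j ≤ (d.natAbs).factorization p := hjle
      _ = ∑ l ∈ Finset.univ.erase i, ((n i - n l).natAbs).factorization p := hfacsum
      _ ≤ ∑ _l ∈ Finset.univ.erase i, (t - 1) := Finset.sum_le_sum hfacbd
      _ = k * (t - 1) := by rw [Finset.sum_const, hcard, smul_eq_mul]
  omega

lemma count_lemma (p : ℕ) (hp : p.Prime) (k t j : ℕ) (hk : 1 ≤ k) (ht : 1 ≤ t)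
    (htj : t ≤ j) (hlt : k * (t - 1) < j)
    (f : Polynomial ℤ) (hdeg : f.natDegree ≤ k) (hcont : Int.gcd f.content p = 1) :
    rho f (p ^ j) ≤ k * p ^ (j - t) := by
  classical
  set S : Finset ℕ := (Finset.range (p ^ j)).filter
    (fun n : ℕ => ((p ^ j : ℕ) : ℤ) ∣ f.eval (n : ℤ)) with hS
  have hrho : rho f (p ^ j) = S.card := rfl
  have hppos : 0 < p ^ t := pow_pos hp.pos t
  have hsplit : p ^ (j - t) * p ^ t = p ^ j := by
    rw [← pow_add, Nat.sub_add_cancel htj]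
  -- fibers of reduction mod p^t have size ≤ p^(j-t)
  have hfiber : ∀ b ∈ S.image (· % p ^ t), (S.filter (fun a => a % p ^ t = b)).card ≤ p ^ (j - t) := by
    intro b _
    have : (S.filter (fun a => a % p ^ t = b)).card ≤ (Finset.range (p ^ (j - t))).card := by
      refine Finset.card_le_card_of_injOn (fun a => a / p ^ t) ?_ ?_
      · intro a ha
        obtain ⟨haS, -⟩ := Finset.mem_filter.mp ha
        have halt : a < p ^ j := Finset.mem_range.mp (Finset.mem_filter.mp haS).1
        rw [Finset.mem_coe, Finset.mem_range]
        rw [Nat.div_lt_iff_lt_mul hppos, hsplit]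
        exact halt
      · intro a ha b' hb' hab
        obtain ⟨-, ha2⟩ := Finset.mem_filter.mp ha
        obtain ⟨-, hb2⟩ := Finset.mem_filter.mp hb'
        have hab' : a / p ^ t = b' / p ^ t := hab
        have ha2' : a % p ^ t = b := ha2
        have hb2' : b' % p ^ t = b := hb2
        calc a = p ^ t * (a / p ^ t) + a % p ^ t := (Nat.div_add_mod a _).symm
          _ = p ^ t * (b' / p ^ t) + b' % p ^ t := by rw [hab', ha2', hb2']
          _ = b' := Nat.div_add_mod b' _
    simpa using this
  -- the image has at most k elements
  have himage : (S.image (· % p ^ t)).card ≤ k := by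
    by_contra h
    push_neg at h
    obtain ⟨T', hT'sub, hT'card⟩ := Finset.exists_subset_card_eq h
    set e := T'.orderIsoOfFin hT'card with he
    have hmem : ∀ i : Fin (k + 1), ((e i : ℕ)) ∈ S.image (· % p ^ t) :=
      fun i => hT'sub (e i).2
    have hex : ∀ i : Fin (k + 1), ∃ x, x ∈ S ∧ x % p ^ t = (e i : ℕ) := by
      intro i
      obtain ⟨x, hx, hx2⟩ := Finset.mem_image.mp (hmem i)
      exact ⟨x, hx, hx2⟩
    choose a ha hamod using hex
    refine key_lemma p hp k t j hk hlt f hdeg hcont (fun i => (a i : ℤ)) ?_ ?_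
    · intro i
      have := (Finset.mem_filter.mp (ha i)).2
      exact_mod_cast this
    · intro i l hil hdvd
      have hmodeq : a l ≡ a i [MOD p ^ t] := by
        rw [Nat.modEq_iff_dvd]
        simp only [Nat.cast_pow]
        exact hdvd
      have : (e i : ℕ) = (e l : ℕ) := by
        rw [← hamod i, ← hamod l]
        exact hmodeq.symm
      exact hil (e.injective (Subtype.coe_injective this))
  calc rho f (p ^ j) = S.card := hrho
    _ ≤ p ^ (j - t) * (S.image (· % p ^ t)).card :=
        Finset.card_le_mul_card_image S _ hfiber
    _ ≤ p ^ (j - t) * k := Nat.mul_le_mul_left _ himage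
    _ = k * p ^ (j - t) := Nat.mul_comm _ _

end Aux

theorem squarefree_values_stmt0 (p : ℕ) (hp : p.Prime) (k : ℕ) (hk : 1 ≤ k)
    (f : Polynomial ℤ) (hdeg : f.natDegree = k)
    (hdisc : disc f ≠ 0) (hcont : Int.gcd f.content p = 1)
    (j : ℕ) (hj : 1 ≤ j) :
    (rho f (p ^ j) : ℝ) ≤
      k * min ((p : ℝ) ^ ((j : ℝ) * (1 - 1 / (k : ℝ)))) ((p : ℝ) ^ (j - 1)) := by
  set t := (j - 1) / k + 1 with htdef
  have hkpos : 0 < k := hk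
  have ht1 : 1 ≤ t := Nat.le_add_left 1 _
  have htj : t ≤ j := by
    calc t = (j - 1) / k + 1 := htdef
      _ ≤ (j - 1) + 1 := Nat.add_le_add_right (Nat.div_le_self _ _) 1
      _ = j := by omega
  have hlt : k * (t - 1) < j := by
    have h2 : t - 1 = (j - 1) / k := by omega
    calc k * (t - 1) = (j - 1) / k * k := by rw [h2, Nat.mul_comm]
      _ ≤ j - 1 := Nat.div_mul_le_self _ _
      _ < j := by omega
  have hjkt : j ≤ k * t := by
    have h := Nat.lt_div_mul_add (a := j - 1) hkpos
    have h4 : k * t = (j - 1) / k * k + k := by rw [htdef]; ring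
    calc j = (j - 1) + 1 := by omega
      _ ≤ (j - 1) / k * k + k := h
      _ = k * t := h4.symm
  have hnat := count_lemma p hp k t j hk ht1 htj hlt f (le_of_eq hdeg) hcont
  have hp1 : (1 : ℝ) ≤ (p : ℝ) := by exact_mod_cast hp.one_lt.le
  have hA : (p : ℝ) ^ (j - t) ≤ (p : ℝ) ^ ((j : ℝ) * (1 - 1 / (k : ℝ))) := by
    rw [← Real.rpow_natCast (p : ℝ) (j - t)]
    apply Real.rpow_le_rpow_of_exponent_le hp1
    have hkR : (0 : ℝ) < (k : ℝ) := by exact_mod_cast hkpos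
    rw [Nat.cast_sub htj]
    have hdiv : (j : ℝ) / (k : ℝ) ≤ (t : ℝ) := by
      rw [div_le_iff₀ hkR]
      have : (j : ℝ) ≤ (k : ℝ) * (t : ℝ) := by exact_mod_cast hjkt
      linarith
    have heq : (j : ℝ) * (1 - 1 / (k : ℝ)) = (j : ℝ) - (j : ℝ) / (k : ℝ) := by
      field_simp
    rw [heq]
    linarith
  have hB : (p : ℝ) ^ (j - t) ≤ (p : ℝ) ^ (j - 1) :=
    pow_le_pow_right₀ hp1 (by omega)
  calc (rho f (p ^ j) : ℝ) ≤ ((k * p ^ (j - t) : ℕ) : ℝ) := by exact_mod_cast hnat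
    _ = (k : ℝ) * (p : ℝ) ^ (j - t) := by push_cast; ring
    _ ≤ (k : ℝ) * min ((p : ℝ) ^ ((j : ℝ) * (1 - 1 / (k : ℝ)))) ((p : ℝ) ^ (j - 1)) :=
        mul_le_mul_of_nonneg_left (le_min hA hB) (by positivity)
end

section
/- Let f ∈ ℤ[X] be a polynomial of degree k ≥ 1 with nonzero discriminant and content 1. Then for every ε > 0 there is a constant C depending only on k and ε such that for all M ≥ 2, the sum ∑_{m ≤ M} ρ_f(m) ≤ C · M^{1+ε}, uniformly in f. -/
open Polynomial

open Finset

lemma dvd_eval_iff (f : Polynomial ℤ) (m : ℕ) (n : ℤ) :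
    (m : ℤ) ∣ f.eval n ↔ (f.map (Int.castRingHom (ZMod m))).eval (n : ZMod m) = 0 := by
  rw [eval_intCast_map, ← ZMod.intCast_zmod_eq_zero_iff_dvd]
  rfl

lemma map_ne_zero_of_content (f : Polynomial ℤ) (hc : f.content = 1) (p : ℕ) (hp : p.Prime) :
    f.map (Int.castRingHom (ZMod p)) ≠ 0 := by
  intro h
  have hall : ∀ i ∈ f.support, (p : ℤ) ∣ f.coeff i := by
    intro i _
    have := Polynomial.ext_iff.mp h i
    simpa [Polynomial.coeff_map, ZMod.intCast_zmod_eq_zero_iff_dvd] using this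
  have : (p : ℤ) ∣ f.content := Finset.dvd_gcd hall
  rw [hc] at this
  have h2 := Int.le_of_dvd one_pos this
  have h3 : (2:ℤ) ≤ (p:ℤ) := by exact_mod_cast hp.two_le
  omega
  
lemma rho_one (f : Polynomial ℤ) : rho f 1 = 1 := by
  simp [rho]

lemma rho_prime_le (f : Polynomial ℤ) (k : ℕ) (hdeg : f.natDegree = k)
    (hc : f.content = 1) (p : ℕ) (hp : p.Prime) : rho f p ≤ k := by
  haveI : Fact p.Prime := ⟨hp⟩
  set g := f.map (Int.castRingHom (ZMod p)) with hg
  have hg0 : g ≠ 0 := map_ne_zero_of_content f hc p hp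
  have : ((Finset.range p).filter (fun n : ℕ => (p : ℤ) ∣ f.eval (n : ℤ))).card ≤
      g.roots.toFinset.card := by
    apply Finset.card_le_card_of_injOn (fun n => ((n : ℕ) : ZMod p))
    · intro n hn
      simp only [Finset.mem_coe, Finset.mem_filter, Finset.mem_range] at hn
      rw [Finset.mem_coe, Multiset.mem_toFinset, mem_roots hg0]
      have := (dvd_eval_iff f p (n : ℤ)).mp hn.2
      rwa [Int.cast_natCast] at this
    · intro a ha b hb hab
      simp only [Finset.coe_filter, Set.mem_setOf_eq, Finset.mem_range] at ha hb
      have := ZMod.val_cast_of_lt ha.1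
      have := ZMod.val_cast_of_lt hb.1
      simp only at hab
      have : ((a : ZMod p)).val = ((b : ZMod p)).val := by rw [hab]
      rwa [ZMod.val_cast_of_lt ha.1, ZMod.val_cast_of_lt hb.1] at this
  calc rho f p ≤ g.roots.toFinset.card := this
    _ ≤ Multiset.card g.roots := Multiset.toFinset_card_le _
    _ ≤ g.natDegree := Polynomial.card_roots' g
    _ ≤ f.natDegree := Polynomial.natDegree_map_le
    _ = k := hdeg

lemma dvd_eval_mod (f : Polynomial ℤ) (m n : ℕ) :
    (m : ℤ) ∣ f.eval ((n % m : ℕ) : ℤ) ↔ (m : ℤ) ∣ f.eval (n : ℤ) := by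
  rw [dvd_eval_iff, dvd_eval_iff]
  norm_cast
  rw [ZMod.natCast_mod]

lemma rho_prime_pow_le (f : Polynomial ℤ) (p e : ℕ) (hp : 2 ≤ p) (he : 1 ≤ e) :
    rho f (p ^ e) ≤ rho f p * p ^ (e - 1) := by
  have hp0 : 0 < p := by omega
  unfold rho
  rw [← Finset.card_range (p ^ (e-1)), ← Finset.card_product]
  apply Finset.card_le_card_of_injOn (fun n => (n % p, n / p))
  · intro n hn
    simp only [Finset.mem_coe, Finset.mem_filter, Finset.mem_range] at hn
    obtain ⟨hn1, hn2⟩ := hn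
    simp only [Finset.mem_coe, Finset.mem_product, Finset.mem_filter, Finset.mem_range]
    refine ⟨⟨Nat.mod_lt _ hp0, ?_⟩, ?_⟩
    · rw [dvd_eval_mod]
      refine dvd_trans ?_ hn2
      push_cast
      exact dvd_pow_self (p:ℤ) (by omega : e ≠ 0)
    · have : p ^ e = p * p ^ (e - 1) := by
        rw [← pow_succ']; congr 1; omega
      rw [this] at hn1
      exact Nat.div_lt_of_lt_mul hn1
  · intro a _ b _ hab
    simp only [Prod.mk.injEq] at hab
    calc a = p * (a / p) + a % p := (Nat.div_add_mod a p).symm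
      _ = p * (b / p) + b % p := by rw [hab.1, hab.2]
      _ = b := Nat.div_add_mod b p

lemma rho_mul_le (f : Polynomial ℤ) (a b : ℕ) (ha : 0 < a) (hb : 0 < b)
    (hab : Nat.Coprime a b) : rho f (a * b) ≤ rho f a * rho f b := by
  unfold rho
  rw [← Finset.card_product]
  apply Finset.card_le_card_of_injOn (fun n => (n % a, n % b))
  · intro n hn
    simp only [Finset.mem_coe, Finset.mem_filter, Finset.mem_range] at hn
    obtain ⟨hn1, hn2⟩ := hn
    have hna : (a : ℤ) ∣ f.eval (n : ℤ) :=
      dvd_trans (by exact_mod_cast Dvd.intro b rfl) hn2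
    have hnb : (b : ℤ) ∣ f.eval (n : ℤ) :=
      dvd_trans (by exact_mod_cast Dvd.intro_left a rfl) hn2
    simp only [Finset.mem_coe, Finset.mem_product, Finset.mem_filter, Finset.mem_range]
    exact ⟨⟨Nat.mod_lt _ ha, (dvd_eval_mod f a n).mpr hna⟩,
      ⟨Nat.mod_lt _ hb, (dvd_eval_mod f b n).mpr hnb⟩⟩
  · intro x hx y hy hxy
    simp only [Finset.mem_coe, Finset.mem_filter, Finset.mem_range] at hx hy
    simp only [Prod.mk.injEq] at hxy
    have hmod : x ≡ y [MOD a * b] :=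
      (Nat.modEq_and_modEq_iff_modEq_mul hab).mp
        ⟨Nat.ModEq.trans (Nat.mod_modEq x a).symm (hxy.1 ▸ Nat.mod_modEq y a),
         Nat.ModEq.trans (Nat.mod_modEq x b).symm (hxy.2 ▸ Nat.mod_modEq y b)⟩
    exact Nat.ModEq.eq_of_lt_of_lt hmod hx.1 hy.1

lemma rho_le_prod (f : Polynomial ℤ) (k : ℕ) (hdeg : f.natDegree = k)
    (hc : f.content = 1) (m : ℕ) :
    rho f m ≤ ∏ p ∈ m.primeFactors, k * p ^ (m.factorization p - 1) := by
  induction m using Nat.recOnPosPrimePosCoprime with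
  | zero => simp [rho]
  | one => simp [rho_one]
  | prime_pow p n hp hn =>
    have hp' : p.Prime := hp
    rw [Nat.primeFactors_prime_pow (by omega : n ≠ 0) hp, Finset.prod_singleton,
      Nat.Prime.factorization_pow hp, Finsupp.single_eq_same]
    calc rho f (p ^ n) ≤ rho f p * p ^ (n - 1) :=
          rho_prime_pow_le f p n hp'.two_le hn
      _ ≤ k * p ^ (n - 1) :=
          Nat.mul_le_mul_right _ (rho_prime_le f k hdeg hc p hp')
  | coprime a b ha hb hab iha ihb =>
    have ha0 : a ≠ 0 := by omega
    have hb0 : b ≠ 0 := by omega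
    have hdisj : Disjoint a.primeFactors b.primeFactors :=
      Nat.Coprime.disjoint_primeFactors hab
    have hunion : (a * b).primeFactors = a.primeFactors ∪ b.primeFactors :=
      Nat.Coprime.primeFactors_mul hab
    calc rho f (a * b) ≤ rho f a * rho f b := rho_mul_le f a b (by omega) (by omega) hab
      _ ≤ (∏ p ∈ a.primeFactors, k * p ^ (a.factorization p - 1)) *
          (∏ p ∈ b.primeFactors, k * p ^ (b.factorization p - 1)) :=
          Nat.mul_le_mul iha ihb
      _ = ∏ p ∈ (a * b).primeFactors, k * p ^ ((a * b).factorization p - 1) := by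
          rw [hunion, Finset.prod_union hdisj]
          have key : ∀ c d : ℕ, c ≠ 0 → d ≠ 0 → Nat.Coprime c d →
              ∀ p ∈ c.primeFactors, (c * d).factorization p = c.factorization p := by
            intro c d hc0 hd0 hcd p hpc
            rw [Nat.factorization_mul hc0 hd0, Finsupp.add_apply]
            have : d.factorization p = 0 := by
              apply Nat.factorization_eq_zero_of_not_dvd
              intro hd
              have hpp := Nat.prime_of_mem_primeFactors hpc
              have h1 : p = 1 := Nat.Coprime.eq_one_of_dvd
                (hcd.coprime_dvd_left (Nat.dvd_of_mem_primeFactors hpc)) hd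
              exact absurd h1 hpp.ne_one
            omega
          congr 1
          · exact Finset.prod_congr rfl fun p hpa => by
              rw [key a b ha0 hb0 hab p hpa]
          · exact Finset.prod_congr rfl fun p hpb => by
              rw [mul_comm a b, key b a hb0 ha0 hab.symm p hpb]


noncomputable def w (k : ℕ) (ε : ℝ) (p e : ℕ) : ℝ :=
  if e = 0 then 1 else (k : ℝ) * (p : ℝ) ^ (e - 1 : ℕ) / (p : ℝ) ^ ((e : ℝ) * (1 + ε))

noncomputable def G (k : ℕ) (ε : ℝ) (m : ℕ) : ℝ :=
  ∏ p ∈ m.primeFactors, w k ε p (m.factorization p)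

lemma w_nonneg (k : ℕ) (ε : ℝ) (p e : ℕ) : 0 ≤ w k ε p e := by
  unfold w
  split
  · norm_num
  · positivity

lemma G_nonneg (k : ℕ) (ε : ℝ) (m : ℕ) : 0 ≤ G k ε m :=
  Finset.prod_nonneg fun p _ => w_nonneg k ε p _

lemma G_identity (k : ℕ) (ε : ℝ) (m : ℕ) (hm : m ≠ 0) :
    ((∏ p ∈ m.primeFactors, k * p ^ (m.factorization p - 1) : ℕ) : ℝ) =
      (m : ℝ) ^ ((1 : ℝ) + ε) * G k ε m := by
  have hmr : (m : ℝ) = ∏ p ∈ m.primeFactors, (p : ℝ) ^ (m.factorization p : ℕ) := by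
    conv_lhs => rw [← Nat.factorization_prod_pow_eq_self hm]
    rw [Nat.prod_factorization_eq_prod_primeFactors]
    push_cast
    rfl
  have hrp : (m : ℝ) ^ ((1 : ℝ) + ε) =
      ∏ p ∈ m.primeFactors, (p : ℝ) ^ ((m.factorization p : ℝ) * (1 + ε)) := by
    rw [hmr, ← Real.finset_prod_rpow _ _ (fun p _ => by positivity)]
    apply Finset.prod_congr rfl
    intro p hp
    rw [← Real.rpow_natCast (p : ℝ) (m.factorization p), ← Real.rpow_mul (by positivity)]
  rw [hrp]
  unfold G
  rw [← Finset.prod_mul_distrib]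
  push_cast
  apply Finset.prod_congr rfl
  intro p hp
  have hppos : (0 : ℝ) < p :=
    mod_cast (Nat.prime_of_mem_primeFactors hp).pos
  have hfe : m.factorization p ≠ 0 := by
    rw [← Nat.support_factorization] at hp
    exact Finsupp.mem_support_iff.mp hp
  rw [w, if_neg hfe]
  field_simp

lemma G_split (k : ℕ) (ε : ℝ) (p : ℕ) (hp : p.Prime) (m : ℕ) (hm : m ≠ 0) :
    G k ε m = w k ε p (m.factorization p) * G k ε (ordCompl[p] m) := by
  by_cases he0 : m.factorization p = 0
  · rw [he0, w, if_pos rfl, one_mul, pow_zero, Nat.div_one]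
  · have hc0 : ordCompl[p] m ≠ 0 := (Nat.ordCompl_pos p hm).ne'
    have hpc : ¬ p ∣ ordCompl[p] m := Nat.not_dvd_ordCompl hp hm
    have hpnotin : p ∉ (ordCompl[p] m).primeFactors :=
      fun h => hpc (Nat.dvd_of_mem_primeFactors h)
    have hpf : m.primeFactors = insert p ((ordCompl[p] m).primeFactors) := by
      conv_lhs => rw [← Nat.ordProj_mul_ordCompl_eq_self m p]
      rw [Nat.primeFactors_mul (pow_ne_zero _ hp.pos.ne') hc0,
        Nat.primeFactors_prime_pow he0 hp]
      ext q; simp [or_comm]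
    have hfq : ∀ q ∈ (ordCompl[p] m).primeFactors,
        m.factorization q = (ordCompl[p] m).factorization q := by
      intro q hq
      have hqp : q ≠ p := fun h => hpnotin (h ▸ hq)
      conv_lhs => rw [← Nat.ordProj_mul_ordCompl_eq_self m p]
      rw [Nat.factorization_mul (pow_ne_zero _ hp.pos.ne') hc0, Finsupp.add_apply,
        Nat.Prime.factorization_pow hp, Finsupp.single_apply, if_neg (fun h => hqp h.symm)]
      omega
    unfold G
    rw [hpf, Finset.prod_insert hpnotin]
    congr 1
    exact Finset.prod_congr rfl fun q hq => by rw [hfq q hq]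

lemma sum_G_le (k : ℕ) (ε : ℝ) (M : ℕ) (hM : 1 ≤ M) (Q : Finset ℕ) :
    (∀ q ∈ Q, q.Prime) →
    ∑ m ∈ (Finset.Icc 1 M).filter (fun m => m.primeFactors ⊆ Q), G k ε m ≤
      ∏ p ∈ Q, ∑ e ∈ Finset.range (M + 1), w k ε p e := by
  induction Q using Finset.induction_on with
  | empty =>
    intro _
    have hfilt : (Finset.Icc 1 M).filter (fun m => m.primeFactors ⊆ (∅ : Finset ℕ)) = {1} := by
      ext m
      simp only [Finset.mem_filter, Finset.mem_Icc, Finset.subset_empty, Finset.mem_singleton,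
        Nat.primeFactors_eq_empty]
      constructor
      · rintro ⟨⟨h1, _⟩, h2 | h2⟩ <;> omega
      · rintro rfl
        exact ⟨⟨le_refl 1, hM⟩, Or.inr rfl⟩
    rw [hfilt, Finset.prod_empty, Finset.sum_singleton]
    simp [G]
  | @insert p Q hpQ ih =>
    intro hQ'
    have hp : p.Prime := hQ' p (Finset.mem_insert_self _ _)
    have ihQ : ∀ q ∈ Q, q.Prime := fun q hq => hQ' q (Finset.mem_insert_of_mem hq)
    set S := (Finset.Icc 1 M).filter (fun m => m.primeFactors ⊆ insert p Q) with hS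
    set T := (Finset.Icc 1 M).filter (fun m => m.primeFactors ⊆ Q) with hT
    have hmem : ∀ m ∈ S, 1 ≤ m ∧ m ≤ M ∧ m.primeFactors ⊆ insert p Q := by
      intro m hm
      rw [hS, Finset.mem_filter, Finset.mem_Icc] at hm
      exact ⟨hm.1.1, hm.1.2, hm.2⟩
    have hinj : ∀ m1 ∈ S, ∀ m2 ∈ S,
        (m1.factorization p, ordCompl[p] m1) = (m2.factorization p, ordCompl[p] m2) →
        m1 = m2 := by
      intro m1 hm1 m2 hm2 h
      simp only [Prod.mk.injEq] at h
      have e1 := Nat.ordProj_mul_ordCompl_eq_self m1 p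
      have e2 := Nat.ordProj_mul_ordCompl_eq_self m2 p
      rw [h.2, h.1] at e1
      exact e1.symm.trans e2
    have himage : S.image (fun m => (m.factorization p, ordCompl[p] m)) ⊆
        (Finset.range (M + 1)) ×ˢ T := by
      intro x hx
      rw [Finset.mem_image] at hx
      obtain ⟨m, hm, rfl⟩ := hx
      obtain ⟨h1, h2, h3⟩ := hmem m hm
      have hm0 : m ≠ 0 := by omega
      rw [Finset.mem_product, Finset.mem_range, hT, Finset.mem_filter, Finset.mem_Icc]
      refine ⟨?_, ⟨Nat.ordCompl_pos p hm0, le_trans (Nat.le_of_dvd (by omega)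
        (Nat.ordCompl_dvd m p)) h2⟩, ?_⟩
      · -- factorization p ≤ M
        have he : m.factorization p < 2 ^ m.factorization p := Nat.lt_two_pow_self
        have h2p : 2 ^ m.factorization p ≤ p ^ m.factorization p :=
          Nat.pow_le_pow_left hp.two_le _
        have hdvd : p ^ m.factorization p ≤ m :=
          Nat.le_of_dvd (by omega) (Nat.ordProj_dvd m p)
        omega
      · intro q hq
        have hqm : q ∈ m.primeFactors :=
          Nat.primeFactors_mono (Nat.ordCompl_dvd m p) hm0 hq
        have hqp : q ≠ p := by
          intro h
          subst h
          exact Nat.not_dvd_ordCompl hp hm0 (Nat.dvd_of_mem_primeFactors hq)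
        rcases Finset.mem_insert.mp (h3 hqm) with h | h
        · exact absurd h hqp
        · exact h
    calc ∑ m ∈ S, G k ε m
        = ∑ x ∈ S.image (fun m => (m.factorization p, ordCompl[p] m)),
            w k ε p x.1 * G k ε x.2 := by
          rw [Finset.sum_image hinj]
          exact Finset.sum_congr rfl fun m hm => by
            dsimp only
            exact G_split k ε p hp m (by have := (hmem m hm).1; omega)
      _ ≤ ∑ x ∈ (Finset.range (M + 1)) ×ˢ T, w k ε p x.1 * G k ε x.2 :=
          Finset.sum_le_sum_of_subset_of_nonneg himage
            (fun x _ _ => mul_nonneg (w_nonneg _ _ _ _) (G_nonneg _ _ _))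
      _ = (∑ e ∈ Finset.range (M + 1), w k ε p e) * (∑ c ∈ T, G k ε c) := by
          rw [Finset.sum_product, ← Finset.sum_mul_sum]
      _ ≤ (∑ e ∈ Finset.range (M + 1), w k ε p e) *
            ∏ q ∈ Q, ∑ e ∈ Finset.range (M + 1), w k ε q e := by
          apply mul_le_mul_of_nonneg_left (ih ihQ)
          exact Finset.sum_nonneg fun e _ => w_nonneg _ _ _ _
      _ = ∏ q ∈ insert p Q, ∑ e ∈ Finset.range (M + 1), w k ε q e := by
          rw [Finset.prod_insert hpQ]

lemma geom_le' (s : ℝ) (h0 : 0 ≤ s) (h1 : s < 1) (M : ℕ) :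
    ∑ i ∈ Finset.range M, s ^ i ≤ (1 - s)⁻¹ := by
  have hs1 : s ≠ 1 := ne_of_lt h1
  have h2 : (0:ℝ) < 1 - s := by linarith
  rw [geom_sum_eq hs1, ← neg_div_neg_eq, neg_sub, neg_sub, div_le_iff₀ h2, inv_mul_cancel₀ h2.ne']
  have : 0 ≤ s ^ M := pow_nonneg h0 M
  linarith

lemma factor_le (k : ℕ) (ε : ℝ) (hε : 0 < ε) (M p : ℕ) (hp : 2 ≤ p) :
    ∑ e ∈ Finset.range (M + 1), w k ε p e ≤
      1 + (k : ℝ) * (1 / (p * ((p : ℝ) ^ ε - 1))) := by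
  have hq0 : (0:ℝ) < p := by positivity
  have hq1 : (1:ℝ) < p := by exact_mod_cast hp.trans_lt' one_lt_two
  set A := (p : ℝ) ^ ε with hA
  have hA1 : 1 < A := by
    rw [hA]
    exact (Real.one_lt_rpow_iff_of_pos hq0).mpr (Or.inl ⟨hq1, hε⟩)
  have hA0 : 0 < A := by linarith
  have hterm : ∀ i : ℕ, w k ε p (i + 1) = ((k : ℝ) / p) * (A⁻¹) ^ (i + 1) := by
    intro i
    rw [w, if_neg (Nat.succ_ne_zero i)]
    have hexp : (p : ℝ) ^ (((i+1 : ℕ) : ℝ) * (1 + ε)) = (p : ℝ) ^ (i+1) * A ^ (i+1) := by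
      rw [mul_add, mul_one, Real.rpow_add hq0, Real.rpow_natCast]
      congr 1
      rw [hA, mul_comm, Real.rpow_mul hq0.le, Real.rpow_natCast]
    rw [hexp]
    have h1 : ((i + 1 : ℕ) - 1 : ℕ) = i := by omega
    rw [h1]
    field_simp
    rw [one_div, inv_pow, mul_inv_cancel_right₀ (pow_ne_zero _ hA0.ne')]; ring
  calc ∑ e ∈ Finset.range (M + 1), w k ε p e
      = w k ε p 0 + ∑ i ∈ Finset.range M, w k ε p (i + 1) := by
        rw [Finset.sum_range_succ']
        ring
    _ = 1 + ((k : ℝ) / p) * A⁻¹ * ∑ i ∈ Finset.range M, (A⁻¹) ^ i := by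
        rw [w, if_pos rfl]
        congr 1
        rw [Finset.mul_sum]
        apply Finset.sum_congr rfl
        intro i _
        rw [hterm i, pow_succ]
        ring
    _ ≤ 1 + ((k : ℝ) / p) * A⁻¹ * (1 - A⁻¹)⁻¹ := by
        have h1 : A⁻¹ < 1 := inv_lt_one_of_one_lt₀ hA1
        have h2 : (0:ℝ) ≤ A⁻¹ := by positivity
        have hg := geom_le' A⁻¹ h2 h1 M
        have hnn : (0:ℝ) ≤ (k : ℝ) / (p:ℝ) * A⁻¹ := by positivity
        nlinarith [mul_le_mul_of_nonneg_left hg hnn]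
    _ = 1 + (k : ℝ) * (1 / (p * (A - 1))) := by
        have : A⁻¹ * (1 - A⁻¹)⁻¹ = (A - 1)⁻¹ := by
          field_simp
        rw [mul_assoc, this]
        field_simp


noncomputable def U (ε : ℝ) (n : ℕ) : ℝ :=
  if 2 ≤ n then 1 / (n * ((n : ℝ) ^ ε - 1)) else 0

lemma U_nonneg (ε : ℝ) (hε : 0 < ε) (n : ℕ) : 0 ≤ U ε n := by
  unfold U
  split
  · rename_i h
    have hn1 : (1:ℝ) < (n : ℝ) := by exact_mod_cast h.trans_lt' one_lt_two
    have h1 : 1 < (n : ℝ) ^ ε :=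
      (Real.one_lt_rpow_iff_of_pos (by linarith)).mpr (Or.inl ⟨hn1, hε⟩)
    have : (0:ℝ) < (n : ℝ) * ((n : ℝ) ^ ε - 1) :=
      mul_pos (by linarith) (by linarith)
    exact le_of_lt (one_div_pos.mpr this)
  · exact le_refl 0

lemma U_le (ε : ℝ) (hε : 0 < ε) (n : ℕ) :
    U ε n ≤ ((2:ℝ) ^ ε / ((2:ℝ) ^ ε - 1)) * ((n : ℝ) ^ ((1:ℝ) + ε))⁻¹ := by
  have h2 : (1:ℝ) < (2:ℝ) ^ ε :=
    (Real.one_lt_rpow_iff_of_pos (by norm_num)).mpr (Or.inl ⟨one_lt_two, hε⟩)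
  unfold U
  split
  · rename_i h
    have hn0 : (0:ℝ) < n := by
      have : 0 < n := by omega
      exact_mod_cast this
    have hnε : (2:ℝ) ^ ε ≤ (n:ℝ) ^ ε :=
      Real.rpow_le_rpow (by norm_num) (by exact_mod_cast h) hε.le
    have hn1 : 1 < (n:ℝ) ^ ε := lt_of_lt_of_le h2 hnε
    have hd1 : (0:ℝ) < (n:ℝ) * ((n:ℝ) ^ ε - 1) := mul_pos hn0 (by linarith)
    have hd2 : (0:ℝ) < (n:ℝ) * (n:ℝ) ^ ε := mul_pos hn0 (by linarith)
    have hd3 : (0:ℝ) < ((2:ℝ) ^ ε - 1) * ((n:ℝ) * (n:ℝ) ^ ε) :=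
      mul_pos (by linarith) hd2
    rw [Real.rpow_add hn0, Real.rpow_one]
    have heq : ((2:ℝ) ^ ε / ((2:ℝ) ^ ε - 1)) * ((n:ℝ) * (n:ℝ) ^ ε)⁻¹ =
        (2:ℝ) ^ ε / (((2:ℝ) ^ ε - 1) * ((n:ℝ) * (n:ℝ) ^ ε)) := by
      field_simp
    rw [heq, div_le_div_iff₀ hd1 hd3, one_mul]
    nlinarith [mul_le_mul_of_nonneg_left hnε hn0.le]
  · apply mul_nonneg
    · exact div_nonneg (Real.rpow_nonneg (by norm_num) _) (by linarith)
    · exact inv_nonneg.mpr (Real.rpow_nonneg (Nat.cast_nonneg n) _)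

lemma U_summable (ε : ℝ) (hε : 0 < ε) : Summable (U ε) := by
  apply Summable.of_nonneg_of_le (U_nonneg ε hε) (U_le ε hε)
  exact (Real.summable_nat_rpow_inv.mpr (by linarith)).mul_left _


theorem squarefree_values_stmt3 (k : ℕ) (hk : 1 ≤ k) (ε : ℝ) (hε : 0 < ε) :
    ∃ C > 0, ∀ f : Polynomial ℤ, f.natDegree = k → disc f ≠ 0 → f.content = 1 →
      ∀ M : ℕ, 2 ≤ M →
        (∑ m ∈ Finset.Icc 1 M, (rho f m : ℝ)) ≤ C * (M : ℝ) ^ ((1 : ℝ) + ε) := by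
  refine ⟨Real.exp ((k : ℝ) * ∑' n, U ε n), Real.exp_pos _, ?_⟩
  intro f hdeg _hdisc hcont M hM
  have hMpow : (0:ℝ) ≤ (M : ℝ) ^ ((1:ℝ) + ε) := Real.rpow_nonneg (Nat.cast_nonneg M) _
  set P := (M + 1).primesBelow with hPdef
  have hP : ∀ q ∈ P, q.Prime := fun q hq => (Nat.mem_primesBelow.mp hq).2
  have hfilter : (Finset.Icc 1 M).filter (fun m => m.primeFactors ⊆ P) = Finset.Icc 1 M := by
    apply Finset.filter_true_of_mem
    intro m hm q hq
    rw [hPdef, Nat.mem_primesBelow]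
    have hq1 := Nat.prime_of_mem_primeFactors hq
    have hm1 := Finset.mem_Icc.mp hm
    have hq2 : q ≤ m := Nat.le_of_dvd (by omega) (Nat.dvd_of_mem_primeFactors hq)
    exact ⟨by omega, hq1⟩
  calc ∑ m ∈ Finset.Icc 1 M, (rho f m : ℝ)
      ≤ ∑ m ∈ Finset.Icc 1 M, (M : ℝ) ^ ((1:ℝ) + ε) * G k ε m := by
        apply Finset.sum_le_sum
        intro m hm
        have hm1 := Finset.mem_Icc.mp hm
        calc (rho f m : ℝ)
            ≤ ((∏ p ∈ m.primeFactors, k * p ^ (m.factorization p - 1) : ℕ) : ℝ) := by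
              exact_mod_cast rho_le_prod f k hdeg hcont m
          _ = (m : ℝ) ^ ((1:ℝ) + ε) * G k ε m := G_identity k ε m (by omega)
          _ ≤ (M : ℝ) ^ ((1:ℝ) + ε) * G k ε m := by
              apply mul_le_mul_of_nonneg_right _ (G_nonneg _ _ _)
              exact Real.rpow_le_rpow (Nat.cast_nonneg m) (by exact_mod_cast hm1.2)
                (by linarith)
    _ = (M : ℝ) ^ ((1:ℝ) + ε) * ∑ m ∈ Finset.Icc 1 M, G k ε m := by
        rw [Finset.mul_sum]
    _ ≤ (M : ℝ) ^ ((1:ℝ) + ε) * ∏ p ∈ P, ∑ e ∈ Finset.range (M + 1), w k ε p e := by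
        apply mul_le_mul_of_nonneg_left _ hMpow
        rw [← hfilter]
        exact sum_G_le k ε M (by omega) P hP
    _ ≤ (M : ℝ) ^ ((1:ℝ) + ε) * ∏ p ∈ P, Real.exp ((k : ℝ) * U ε p) := by
        apply mul_le_mul_of_nonneg_left _ hMpow
        apply Finset.prod_le_prod
        · intro p _
          exact Finset.sum_nonneg fun e _ => w_nonneg _ _ _ _
        · intro p hp
          have hp' := hP p hp
          calc ∑ e ∈ Finset.range (M + 1), w k ε p e
              ≤ 1 + (k : ℝ) * (1 / (p * ((p : ℝ) ^ ε - 1))) :=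
                factor_le k ε hε M p hp'.two_le
            _ = (k : ℝ) * U ε p + 1 := by
                rw [U, if_pos hp'.two_le]; ring
            _ ≤ Real.exp ((k : ℝ) * U ε p) := Real.add_one_le_exp _
    _ = (M : ℝ) ^ ((1:ℝ) + ε) * Real.exp (∑ p ∈ P, (k : ℝ) * U ε p) := by
        rw [Real.exp_sum]
    _ ≤ (M : ℝ) ^ ((1:ℝ) + ε) * Real.exp ((k : ℝ) * ∑' n, U ε n) := by
        apply mul_le_mul_of_nonneg_left _ hMpow
        apply Real.exp_le_exp.mpr
        rw [← Finset.mul_sum]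
        apply mul_le_mul_of_nonneg_left _ (Nat.cast_nonneg k)
        exact Summable.sum_le_tsum P (fun i _ => U_nonneg ε hε i) (U_summable ε hε)
    _ = Real.exp ((k : ℝ) * ∑' n, U ε n) * (M : ℝ) ^ ((1:ℝ) + ε) := by ring
end

section
/- Let k ≥ 1 be fixed and let t ≥ 1. The number of nonzero vectors c = (c₀,…,c_k) ∈ ℤ^{k+1} with Euclidean norm at most t for which the polynomial f_c(X) = c₀ + c₁X + ⋯ + c_k X^k is reducible over ℤ (or has degree less than k) is at most t^{k+o(1)} as t → ∞. -/
open Polynomial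

namespace Sqf10

noncomputable def P (k : ℕ) (c : Fin (k+1) → ℤ) : ℤ[X] :=
  ∑ i : Fin (k+1), Polynomial.C (c i) * Polynomial.X ^ (i : ℕ)

lemma coeff_P (k : ℕ) (c : Fin (k+1) → ℤ) (i : Fin (k+1)) : (P k c).coeff i = c i := by
  simp only [P, finset_sum_coeff, coeff_C_mul, coeff_X_pow]
  rw [Finset.sum_eq_single i]
  · simp
  · intro b _ hb
    have : ¬ ((i : ℕ) = (b : ℕ)) := fun h => hb (Fin.ext h.symm)
    simp [this]
  · simp

lemma P_inj (k : ℕ) : Function.Injective (P k) := by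
  intro c c' h
  funext i
  rw [← coeff_P k c i, ← coeff_P k c' i, h]

lemma natDegree_P_le (k : ℕ) (c : Fin (k+1) → ℤ) : (P k c).natDegree ≤ k := by
  refine (natDegree_sum_le _ _).trans ?_
  rw [Finset.fold_max_le]
  refine ⟨Nat.zero_le _, fun i _ => ?_⟩
  exact ((natDegree_C_mul_le _ _).trans (natDegree_X_pow_le _)).trans (Nat.lt_succ_iff.mp i.isLt)

lemma eval_P (k : ℕ) (c : Fin (k+1) → ℤ) (j : ℤ) :
    (P k c).eval j = ∑ i : Fin (k+1), c i * j ^ (i : ℕ) := by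
  simp [P, eval_finset_sum]

lemma abs_c_le (k : ℕ) (t : ℝ) (c : Fin (k+1) → ℤ)
    (hc : (∑ i, ((c i : ℝ)) ^ 2) ≤ t^2) (ht : 1 ≤ t) (i : Fin (k+1)) : |c i| ≤ ⌈t⌉ := by
  have h1 : ((c i : ℝ))^2 ≤ t^2 := by
    refine le_trans ?_ hc
    exact Finset.single_le_sum (f := fun i => ((c i:ℝ))^2) (fun _ _ => sq_nonneg _)
      (Finset.mem_univ i)
  have h2 : |((c i : ℝ))| ≤ t := abs_le_of_sq_le_sq h1 (by linarith)
  have h3 : ((|c i| : ℤ) : ℝ) ≤ (⌈t⌉ : ℝ) := by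
    push_cast
    exact h2.trans (Int.le_ceil t)
  exact_mod_cast h3

lemma eval_bound (k : ℕ) (hk : 1 ≤ k) (t : ℝ) (ht : 1 ≤ t) (c : Fin (k+1) → ℤ)
    (hc : (∑ i, ((c i : ℝ)) ^ 2) ≤ t^2) (j : ℤ) (hj : j ∈ Finset.Icc (0:ℤ) (2*k)) :
    |(P k c).eval j| ≤ ((k:ℤ)+1) * (2*k)^k * ⌈t⌉ := by
  rw [Finset.mem_Icc] at hj
  have hal := abs_c_le k t c hc ht
  rw [eval_P]
  calc |∑ i : Fin (k+1), c i * j ^ (i:ℕ)| ≤ ∑ i : Fin (k+1), |c i * j ^ (i:ℕ)| :=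
        Finset.abs_sum_le_sum_abs _ _
    _ ≤ ∑ _i : Fin (k+1), (2*(k:ℤ))^k * ⌈t⌉ := by
        refine Finset.sum_le_sum fun i _ => ?_
        rw [abs_mul]
        have h1 : |j ^ (i:ℕ)| ≤ (2*(k:ℤ))^k := by
          rw [abs_pow, abs_of_nonneg hj.1]
          calc j ^ (i:ℕ) ≤ (2*(k:ℤ)) ^ (i:ℕ) := pow_le_pow_left₀ hj.1 hj.2 _
            _ ≤ (2*(k:ℤ)) ^ k := pow_le_pow_right₀ (by omega) (by omega)
        calc |c i| * |j ^ (i:ℕ)| ≤ ⌈t⌉ * (2*(k:ℤ))^k := by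
              refine mul_le_mul (hal i) h1 (abs_nonneg _) ?_
              have : (1:ℝ) ≤ (⌈t⌉ : ℝ) := le_trans ht (Int.le_ceil t)
              exact_mod_cast le_trans zero_le_one this
          _ = (2*(k:ℤ))^k * ⌈t⌉ := mul_comm _ _
    _ = ((k:ℤ)+1) * (2*k)^k * ⌈t⌉ := by
        rw [Finset.sum_const, Finset.card_univ, Fintype.card_fin]
        ring

lemma exists_factor (k : ℕ) (hk : 1 ≤ k) (f : ℤ[X]) (hdeg : f.natDegree = k)
    (hirr : ¬ Irreducible (f.map (Int.castRingHom ℚ))) :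
    ∃ g h : ℤ[X], f = g * h ∧ g.natDegree < k ∧ h.natDegree < k := by
  have hf0 : f ≠ 0 := fun h => by simp [h, natDegree_zero] at hdeg; omega
  set q := f.primPart with hq_def
  have hqprim : q.IsPrimitive := f.isPrimitive_primPart
  have hq0 : q ≠ 0 := f.primPart_ne_zero
  have hqdeg : q.natDegree = k := by rw [hq_def, natDegree_primPart, hdeg]
  have hcont : f.content ≠ 0 := by rwa [Ne, content_eq_zero_iff]
  have hqm : ¬ Irreducible (q.map (Int.castRingHom ℚ)) := by
    intro hq
    apply hirr
    have hfq : f.map (Int.castRingHom ℚ) =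
        C ((f.content : ℚ)) * q.map (Int.castRingHom ℚ) := by
      conv_lhs => rw [f.eq_C_content_mul_primPart]
      rw [Polynomial.map_mul, map_C]
      rfl
    have hu : IsUnit (C ((f.content : ℚ))) := by
      rw [Polynomial.isUnit_C]
      exact isUnit_iff_ne_zero.mpr (by exact_mod_cast hcont)
    rw [hfq]
    exact (irreducible_isUnit_mul hu).mpr hq
  have hqirr : ¬ Irreducible q := fun h =>
    hqm ((Polynomial.IsPrimitive.Int.irreducible_iff_irreducible_map_cast hqprim).mp h)
  have hqnu : ¬ IsUnit q := fun h => by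
    have := natDegree_eq_zero_of_isUnit h
    omega
  rw [irreducible_iff] at hqirr
  push_neg at hqirr
  obtain ⟨a, b, hab, hua, hub⟩ := hqirr hqnu
  have ha0 : a ≠ 0 := by rintro rfl; simp at hab; exact hq0 hab
  have hb0 : b ≠ 0 := by rintro rfl; simp at hab; exact hq0 hab
  have hdegab : a.natDegree + b.natDegree = k := by
    rw [← natDegree_mul ha0 hb0, ← hab, hqdeg]
  have hda : 1 ≤ a.natDegree := by
    by_contra h
    have h0 : a.natDegree = 0 := by omega
    obtain ⟨r, hr⟩ := natDegree_eq_zero.mp h0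
    apply hua
    rw [← hr, Polynomial.isUnit_C]
    exact hqprim r ⟨b, by rw [hr, ← hab]⟩
  have hdb : 1 ≤ b.natDegree := by
    by_contra h
    have h0 : b.natDegree = 0 := by omega
    obtain ⟨r, hr⟩ := natDegree_eq_zero.mp h0
    apply hub
    rw [← hr, Polynomial.isUnit_C]
    exact hqprim r ⟨a, by rw [hr, mul_comm, ← hab]⟩
  refine ⟨C f.content * a, b, ?_, ?_, ?_⟩
  · rw [mul_assoc, ← hab, ← eq_C_content_mul_primPart]
  · rw [natDegree_C_mul hcont]; omega
  · omega

lemma exists_points (k : ℕ) (f : ℤ[X]) (hf : f ≠ 0) (hdeg : f.natDegree ≤ k) :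
    ∃ e : Fin k → ℤ, Function.Injective e ∧ (∀ i, e i ∈ Finset.Icc (0:ℤ) (2*k)) ∧
      ∀ i, f.eval (e i) ≠ 0 := by
  classical
  set good := (Finset.Icc (0:ℤ) (2*k)).filter (fun j => f.eval j ≠ 0) with hgood
  have hbad : ((Finset.Icc (0:ℤ) (2*k)).filter (fun j => ¬ f.eval j ≠ 0)).card ≤ k := by
    have hsub : (Finset.Icc (0:ℤ) (2*k)).filter (fun j => ¬ f.eval j ≠ 0) ⊆ f.roots.toFinset := by
      intro j hj
      simp only [Finset.mem_filter, not_not] at hj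
      rw [Multiset.mem_toFinset, mem_roots hf]
      exact hj.2
    calc _ ≤ f.roots.toFinset.card := Finset.card_le_card hsub
      _ ≤ Multiset.card f.roots := f.roots.toFinset_card_le
      _ ≤ f.natDegree := f.card_roots'
      _ ≤ k := hdeg
  have hcardIcc : (Finset.Icc (0:ℤ) (2*k)).card = 2*k+1 := by
    rw [Int.card_Icc]
    omega
  have hgc : k ≤ good.card := by
    have htot := Finset.card_filter_add_card_filter_not (s := Finset.Icc (0:ℤ) (2*k))
      (p := fun j => f.eval j ≠ 0)
    rw [hgood]
    omega
  obtain ⟨s, hs_sub, hs_card⟩ := Finset.exists_subset_card_eq hgc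
  refine ⟨fun i => (s.orderIsoOfFin hs_card i : ℤ), ?_, ?_, ?_⟩
  · intro i j hij
    exact (s.orderIsoOfFin hs_card).injective (Subtype.ext hij)
  · intro i
    have := hs_sub (s.orderIsoOfFin hs_card i).2
    rw [hgood, Finset.mem_filter] at this
    exact this.1
  · intro i
    have := hs_sub (s.orderIsoOfFin hs_card i).2
    rw [hgood, Finset.mem_filter] at this
    exact this.2

lemma eval_determines (k : ℕ) (g g' : ℤ[X]) (hg : g.natDegree < k) (hg' : g'.natDegree < k)
    (e : Fin k → ℤ) (he : Function.Injective e)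
    (hvals : ∀ i, g.eval (e i) = g'.eval (e i)) : g = g' := by
  by_contra hne
  have hd : g - g' ≠ 0 := sub_ne_zero.mpr hne
  have hsub : Finset.univ.image e ⊆ (g - g').roots.toFinset := by
    intro j hj
    obtain ⟨i, _, rfl⟩ := Finset.mem_image.mp hj
    rw [Multiset.mem_toFinset, mem_roots hd]
    simp [IsRoot, hvals i]
  have h1 : (Finset.univ.image e).card = k := by
    rw [Finset.card_image_of_injective _ he, Finset.card_univ, Fintype.card_fin]
  have h2 : (g - g').roots.toFinset.card ≤ k - 1 := by
    calc _ ≤ Multiset.card (g - g').roots := (g - g').roots.toFinset_card_le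
      _ ≤ (g - g').natDegree := (g - g').card_roots'
      _ ≤ max g.natDegree g'.natDegree := natDegree_sub_le _ _
      _ ≤ k - 1 := by omega
  have := Finset.card_le_card hsub
  omega

lemma sum_pos_part (N : ℤ) (hN : 1 ≤ N) :
    ∑ v ∈ Finset.Icc (1:ℤ) N, (2*(((N / |v|) : ℤ):ℝ) + 1) ≤ 2*N*(1 + Real.log N) + N := by
  have hstep : ∀ v ∈ Finset.Icc (1:ℤ) N, (2*(((N / |v|) : ℤ):ℝ) + 1) ≤ 2*((N:ℝ)/v) + 1 := by
    intro v hv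
    rw [Finset.mem_Icc] at hv
    have hv1 : (1:ℤ) ≤ v := hv.1
    have habs : |v| = v := abs_of_pos (by omega)
    rw [habs]
    have hv0 : (0:ℝ) < v := by exact_mod_cast (by omega : (0:ℤ) < v)
    have h1 : ((N / v : ℤ) : ℝ) ≤ (N:ℝ)/v := by
      rw [le_div_iff₀ hv0]
      exact_mod_cast Int.ediv_mul_le N (by omega : v ≠ 0)
    linarith
  calc _ ≤ ∑ v ∈ Finset.Icc (1:ℤ) N, (2*((N:ℝ)/v) + 1) := Finset.sum_le_sum hstep
    _ = 2*(N:ℝ) * (∑ v ∈ Finset.Icc (1:ℤ) N, (1:ℝ)/v) + (Finset.Icc (1:ℤ) N).card := by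
        rw [Finset.sum_add_distrib, Finset.mul_sum, Finset.sum_const, nsmul_eq_mul, mul_comm,
          one_mul]
        congr 1
        refine Finset.sum_congr rfl fun v _ => ?_
        ring
    _ ≤ 2*N*(1 + Real.log N) + N := by
        have hharm : (∑ v ∈ Finset.Icc (1:ℤ) N, (1:ℝ)/v) = harmonic N.toNat := by
          rw [harmonic_eq_sum_Icc]
          push_cast
          refine Finset.sum_nbij' (fun v => v.toNat) (fun n => (n:ℤ)) ?_ ?_ ?_ ?_ ?_
          · intro v hv; rw [Finset.mem_Icc] at hv ⊢; omega
          · intro n hn; rw [Finset.mem_Icc] at hn ⊢; omega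
          · intro v hv; rw [Finset.mem_Icc] at hv; omega
          · intro n hn; omega
          · intro v hv
            rw [Finset.mem_Icc] at hv
            have hvv : ((v.toNat : ℕ) : ℝ) = (v:ℝ) := by
              exact_mod_cast congrArg (Int.cast : ℤ → ℝ) (Int.toNat_of_nonneg (by omega))
            rw [one_div, hvv]
        have hcard : ((Finset.Icc (1:ℤ) N).card : ℝ) ≤ N := by
          rw [Int.card_Icc]
          have : ((N + 1 - 1).toNat : ℤ) = N := by omega
          exact_mod_cast le_of_eq (by exact_mod_cast this)
        have hlog : (harmonic N.toNat : ℝ) ≤ 1 + Real.log N := by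
          refine (harmonic_le_one_add_log _).trans ?_
          have hNN : ((N.toNat : ℕ) : ℝ) = (N:ℝ) := by
            exact_mod_cast congrArg (Int.cast : ℤ → ℝ) (Int.toNat_of_nonneg (by omega))
          rw [hNN]
        have hN' : (0:ℝ) ≤ 2*(N:ℝ) := by positivity
        have := mul_le_mul_of_nonneg_left hlog hN'
        rw [hharm]
        nlinarith [this]

lemma sum_w_le (N : ℤ) (hN : 1 ≤ N) :
    ∑ v ∈ (Finset.Icc (-N) N).erase 0, (2*(((N / |v|) : ℤ):ℝ) + 1) ≤ 6 * N * (1 + Real.log N) := by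
  have hsplit : (Finset.Icc (-N) N).erase 0 = Finset.Icc (-N) (-1) ∪ Finset.Icc 1 N := by
    ext v
    simp only [Finset.mem_erase, Finset.mem_Icc, Finset.mem_union]
    omega
  have hdisj : Disjoint (Finset.Icc (-N) (-1)) (Finset.Icc (1:ℤ) N) := by
    rw [Finset.disjoint_left]
    intro v hv hv'
    rw [Finset.mem_Icc] at hv hv'
    omega
  have hneg : ∑ v ∈ Finset.Icc (-N) (-1), (2*(((N / |v|) : ℤ):ℝ) + 1)
      = ∑ v ∈ Finset.Icc (1:ℤ) N, (2*(((N / |v|) : ℤ):ℝ) + 1) := by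
    refine Finset.sum_nbij' (fun v => -v) (fun v => -v) ?_ ?_ ?_ ?_ ?_
    · intro v hv; rw [Finset.mem_Icc] at hv ⊢; omega
    · intro v hv; rw [Finset.mem_Icc] at hv ⊢; omega
    · intro v _; omega
    · intro v _; omega
    · intro v _; rw [abs_neg]
  rw [hsplit, Finset.sum_union hdisj, hneg]
  have hpos := sum_pos_part N hN
  have hlog : (0:ℝ) ≤ Real.log N := Real.log_nonneg (by exact_mod_cast hN)
  have hN0 : (1:ℝ) ≤ (N:ℝ) := by exact_mod_cast hN
  nlinarith

lemma card_F_le (k : ℕ) (N : ℤ) (hN : 1 ≤ N) :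
    ((Fintype.piFinset (fun _ : Fin k => Finset.Icc (0:ℤ) (2*k)) ×ˢ
      ((Fintype.piFinset (fun _ : Fin k => (Finset.Icc (-N) N).erase 0)).biUnion
        (fun a => {a} ×ˢ Fintype.piFinset
          (fun i : Fin k => Finset.Icc (-(N / |a i|)) (N / |a i|))))).card : ℝ)
    ≤ (2*k+1)^k * (6*N*(1 + Real.log N))^k := by
  classical
  have hsum := sum_w_le N hN
  rw [Finset.card_product]
  push_cast
  have h1 : ((Fintype.piFinset (fun _ : Fin k => Finset.Icc (0:ℤ) (2*k))).card : ℝ)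
      = (2*k+1)^k := by
    rw [Fintype.card_piFinset]
    push_cast
    rw [Finset.prod_const, Finset.card_univ, Fintype.card_fin]
    congr 1
    have hcc : (Finset.Icc (0:ℤ) (2*(k:ℤ))).card = 2*k+1 := by
      rw [Int.card_Icc]; omega
    exact_mod_cast hcc
  have h2 : (((Fintype.piFinset (fun _ : Fin k => (Finset.Icc (-N) N).erase 0)).biUnion
        (fun a => {a} ×ˢ Fintype.piFinset
          (fun i : Fin k => Finset.Icc (-(N / |a i|)) (N / |a i|)))).card : ℝ)
      ≤ (6*N*(1 + Real.log N))^k := by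
    calc _ ≤ ((∑ a ∈ Fintype.piFinset (fun _ : Fin k => (Finset.Icc (-N) N).erase 0),
          ({a} ×ˢ Fintype.piFinset
            (fun i : Fin k => Finset.Icc (-(N / |a i|)) (N / |a i|))).card : ℕ) : ℝ) := by
          exact_mod_cast Nat.cast_le.mpr (Finset.card_biUnion_le)
      _ = ∑ a ∈ Fintype.piFinset (fun _ : Fin k => (Finset.Icc (-N) N).erase 0),
            ∏ i : Fin k, (2*(((N / |a i|) : ℤ):ℝ) + 1) := by
          push_cast
          refine Finset.sum_congr rfl fun a _ => ?_
          rw [Finset.card_product, Finset.card_singleton, one_mul, Fintype.card_piFinset]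
          push_cast
          refine Finset.prod_congr rfl fun i _ => ?_
          rw [Int.card_Icc]
          have hnn : (0:ℤ) ≤ N / |a i| := Int.ediv_nonneg (by omega) (abs_nonneg _)
          have : (N / |a i| + 1 - -(N / |a i|)) = 2*(N / |a i|) + 1 := by ring
          rw [this]
          have h3 : ((2 * (N / |a i|) + 1).toNat : ℤ) = 2*(N / |a i|)+1 :=
            Int.toNat_of_nonneg (by omega)
          exact_mod_cast congrArg (fun z : ℤ => (z:ℝ)) h3
      _ = ∏ i : Fin k, ∑ v ∈ (Finset.Icc (-N) N).erase 0, (2*(((N / |v|) : ℤ):ℝ) + 1) := by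
          rw [Finset.prod_univ_sum]
      _ = (∑ v ∈ (Finset.Icc (-N) N).erase 0, (2*(((N / |v|) : ℤ):ℝ) + 1))^k := by
          rw [Finset.prod_const, Finset.card_univ, Fintype.card_fin]
      _ ≤ (6*N*(1 + Real.log N))^k := by
          refine pow_le_pow_left₀ ?_ hsum k
          refine Finset.sum_nonneg fun v _ => ?_
          have h4 : (0:ℤ) ≤ N / |v| := Int.ediv_nonneg (by omega) (abs_nonneg _)
          have h5 : (0:ℝ) ≤ ((N / |v| : ℤ):ℝ) := by exact_mod_cast h4
          linarith
  calc ((Fintype.piFinset (fun _ : Fin k => Finset.Icc (0:ℤ) (2*k))).card : ℝ) * _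
      ≤ (2*k+1)^k * (6*N*(1 + Real.log N))^k := by
        rw [h1]
        refine mul_le_mul_of_nonneg_left h2 (by positivity)


lemma analytic_bound (k : ℕ) (hk : 1 ≤ k) (ε : ℝ) (hε : 0 < ε) (Mr : ℝ) (hM : 1 ≤ Mr)
    (t : ℝ) (ht : 1 ≤ t) (Nr : ℝ) (hN1 : 1 ≤ Nr) (hNle : Nr ≤ 2*Mr*t) :
    (2*(k:ℝ)+1)^k * (6*Nr*(1+Real.log Nr))^k ≤
      ((2*(k:ℝ)+1)^k * (12*Mr*(1+Real.log (2*Mr)))^k) * ((1+(k:ℝ)/ε)^k) * (t^k * t^ε) := by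
  have hk0 : (0:ℝ) < (k:ℝ) := by exact_mod_cast hk
  have ht0 : (0:ℝ) < t := lt_of_lt_of_le one_pos ht
  have hlogt : (0:ℝ) ≤ Real.log t := Real.log_nonneg ht
  have hlog2M : (0:ℝ) ≤ Real.log (2*Mr) := Real.log_nonneg (by linarith)
  have hlogN0 : (0:ℝ) ≤ Real.log Nr := Real.log_nonneg hN1
  have hNlog : 1 + Real.log Nr ≤ (1+Real.log (2*Mr)) * (1+Real.log t) := by
    have h1 : Real.log Nr ≤ Real.log (2*Mr*t) := Real.log_le_log (by linarith) hNle
    have h2 : Real.log (2*Mr*t) = Real.log (2*Mr) + Real.log t :=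
      Real.log_mul (by linarith) (by linarith)
    rw [h2] at h1
    nlinarith [mul_nonneg hlog2M hlogt]
  have h6 : 6*Nr*(1 + Real.log Nr) ≤ (12*Mr*(1+Real.log (2*Mr))) * (t*(1+Real.log t)) := by
    have hx : Nr*(1+Real.log Nr) ≤ (2*Mr*t)*((1+Real.log (2*Mr))*(1+Real.log t)) :=
      mul_le_mul hNle hNlog (by linarith) (by nlinarith)
    nlinarith
  have hlt : 1 + Real.log t ≤ (1+(k:ℝ)/ε) * t ^ (ε/(k:ℝ)) := by
    have h1 : (1:ℝ) ≤ t ^ (ε/(k:ℝ)) := Real.one_le_rpow ht (by positivity)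
    have h2 : Real.log (t ^ (ε/(k:ℝ))) = (ε/(k:ℝ)) * Real.log t := Real.log_rpow ht0 _
    have h3 : Real.log (t ^ (ε/(k:ℝ))) ≤ t ^ (ε/(k:ℝ)) := by
      have := Real.log_le_sub_one_of_pos (show (0:ℝ) < t ^ (ε/(k:ℝ)) by positivity)
      linarith
    have h4 : Real.log t ≤ ((k:ℝ)/ε) * t ^ (ε/(k:ℝ)) := by
      have h5 : Real.log t = ((k:ℝ)/ε) * Real.log (t ^ (ε/(k:ℝ))) := by
        rw [h2]
        field_simp
      rw [h5]
      exact mul_le_mul_of_nonneg_left h3 (by positivity)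
    nlinarith [mul_le_mul_of_nonneg_left h1 (show (0:ℝ) ≤ (k:ℝ)/ε by positivity)]
  have hrp : (t ^ (ε/(k:ℝ)))^k = t ^ ε := by
    rw [← Real.rpow_natCast (t ^ (ε/(k:ℝ))) k, ← Real.rpow_mul ht0.le]
    congr 1
    field_simp
  have hfin1 : (t*(1+Real.log t))^k ≤ t^k * ((1+(k:ℝ)/ε)^k * t ^ ε) := by
    calc (t*(1+Real.log t))^k ≤ (t*((1+(k:ℝ)/ε) * t ^ (ε/(k:ℝ))))^k := by
          refine pow_le_pow_left₀ (by nlinarith) ?_ k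
          exact mul_le_mul_of_nonneg_left hlt ht0.le
      _ = t^k * ((1+(k:ℝ)/ε)^k * t ^ ε) := by
          rw [mul_pow, mul_pow, hrp]
  calc (2*(k:ℝ)+1)^k * (6*Nr*(1+Real.log Nr))^k
      ≤ (2*(k:ℝ)+1)^k * ((12*Mr*(1+Real.log (2*Mr)))^k * (t*(1+Real.log t))^k) := by
        refine mul_le_mul_of_nonneg_left ?_ (by positivity)
        rw [← mul_pow]
        exact pow_le_pow_left₀ (by nlinarith) h6 k
    _ ≤ (2*(k:ℝ)+1)^k * ((12*Mr*(1+Real.log (2*Mr)))^k * (t^k * ((1+(k:ℝ)/ε)^k * t ^ ε))) := by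
        refine mul_le_mul_of_nonneg_left (mul_le_mul_of_nonneg_left hfin1 ?_) (by positivity)
        positivity
    _ = ((2*(k:ℝ)+1)^k * (12*Mr*(1+Real.log (2*Mr)))^k) * ((1+(k:ℝ)/ε)^k) * (t^k * t^ε) := by
        ring

lemma five_bound (k : ℕ) (t x : ℝ) (ht : 1 ≤ t) (hx : 1 ≤ x) : (5*t)^k ≤ 5^k * (t^k * x) := by
  have ht0 : (0:ℝ) < t := lt_of_lt_of_le one_pos ht
  have h1 : (5*t)^k = 5^k * t^k := mul_pow 5 t k
  rw [h1]
  have h2 : t^k ≤ t^k * x := le_mul_of_one_le_right (by positivity) hx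
  nlinarith [pow_pos ht0 k, pow_pos (show (0:ℝ) < 5 by norm_num) k]

end Sqf10


open Polynomial Sqf10 in
theorem squarefree_values_stmt10 (k : ℕ) (hk : 1 ≤ k) (ε : ℝ) (hε : 0 < ε) :
    ∃ C > 0, ∀ t : ℝ, 1 ≤ t →
      (Set.ncard {c : Fin (k + 1) → ℤ | c ≠ 0 ∧ (∑ i, ((c i : ℝ)) ^ 2) ≤ t ^ 2 ∧
        ((∑ i : Fin (k + 1), Polynomial.C (c i) * Polynomial.X ^ (i : ℕ)).natDegree < k ∨
          ¬ Irreducible ((∑ i : Fin (k + 1), Polynomial.C (c i) * Polynomial.X ^ (i : ℕ)).map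
            (Int.castRingHom ℚ)))} : ℝ) ≤ C * t ^ ((k : ℝ) + ε) := by
  classical
  have hk0 : (0:ℝ) < (k:ℝ) := by exact_mod_cast hk
  set M : ℤ := ((k:ℤ)+1) * (2*(k:ℤ))^k with hMdef
  have h2k1 : (1:ℤ) ≤ 2*(k:ℤ) := by omega
  have hM1 : (1:ℤ) ≤ M := by
    have h1 : (1:ℤ) ≤ (2*(k:ℤ))^k := one_le_pow₀ h2k1
    have h2 : (1:ℤ) ≤ (k:ℤ)+1 := by omega
    nlinarith
  have hMr1 : (1:ℝ) ≤ (M:ℝ) := by exact_mod_cast hM1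
  have hlog2M : (0:ℝ) ≤ Real.log (2*(M:ℝ)) := Real.log_nonneg (by linarith)
  have hK1pos : (0:ℝ) < (2*(k:ℝ)+1)^k * (12*(M:ℝ)*(1+Real.log (2*(M:ℝ))))^k := by
    refine mul_pos (pow_pos (by linarith) k) (pow_pos ?_ k)
    nlinarith
  have hK2pos : (0:ℝ) < (1+(k:ℝ)/ε)^k := by
    refine pow_pos ?_ k
    have : 0 < (k:ℝ)/ε := by positivity
    linarith
  refine ⟨5^k + ((2*(k:ℝ)+1)^k * (12*(M:ℝ)*(1+Real.log (2*(M:ℝ))))^k) * ((1+(k:ℝ)/ε)^k),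
    by positivity, ?_⟩
  intro t ht
  have ht0 : (0:ℝ) < t := lt_of_lt_of_le one_pos ht
  set m : ℤ := ⌈t⌉ with hmdef
  have hm1 : (1:ℤ) ≤ m := by
    have h1 : (1:ℝ) ≤ (m:ℝ) := le_trans ht (Int.le_ceil t)
    exact_mod_cast h1
  have hmt : (m:ℝ) ≤ 2*t := by
    have h1 : (m:ℝ) < t + 1 := by exact_mod_cast Int.ceil_lt_add_one t
    linarith
  set N : ℤ := M * m with hNdef
  have hN1 : (1:ℤ) ≤ N := by nlinarith
  have hNr1 : (1:ℝ) ≤ (N:ℝ) := by exact_mod_cast hN1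
  have hNle : (N:ℝ) ≤ 2*(M:ℝ)*t := by
    have h1 : (N:ℝ) = (M:ℝ)*(m:ℝ) := by push_cast [hNdef]; ring
    rw [h1]
    nlinarith
  have htpow1 : (1:ℝ) ≤ t ^ ε := Real.one_le_rpow ht hε.le
  -- the splitting sets
  set S1 : Set (Fin (k+1) → ℤ) := {c | (∀ i, |c i| ≤ m) ∧ c (Fin.last k) = 0} with hS1def
  set S2 : Set (Fin (k+1) → ℤ) := {c | c ≠ 0 ∧ (∑ i, ((c i : ℝ)) ^ 2) ≤ t^2 ∧
    (P k c).natDegree = k ∧ ¬ Irreducible ((P k c).map (Int.castRingHom ℚ))} with hS2def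
  have hsub : {c : Fin (k + 1) → ℤ | c ≠ 0 ∧ (∑ i, ((c i : ℝ)) ^ 2) ≤ t ^ 2 ∧
        ((∑ i : Fin (k + 1), Polynomial.C (c i) * Polynomial.X ^ (i : ℕ)).natDegree < k ∨
          ¬ Irreducible ((∑ i : Fin (k + 1), Polynomial.C (c i) * Polynomial.X ^ (i : ℕ)).map
            (Int.castRingHom ℚ)))} ⊆ S1 ∪ S2 := by
    intro c hc
    obtain ⟨hc0, hcn, hdisj⟩ := hc
    have hPd : (∑ i : Fin (k+1), Polynomial.C (c i) * Polynomial.X ^ (i:ℕ)) = P k c := rfl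
    rw [hPd] at hdisj
    by_cases hdeg : (P k c).natDegree < k
    · left
      refine ⟨fun i => abs_c_le k t c hcn ht i, ?_⟩
      have hcf := coeff_P k c (Fin.last k)
      rw [Fin.val_last] at hcf
      rw [← hcf]
      exact coeff_eq_zero_of_natDegree_lt hdeg
    · right
      exact ⟨hc0, hcn, le_antisymm (natDegree_P_le k c) (not_lt.mp hdeg),
        hdisj.resolve_left hdeg⟩
  -- finiteness
  have hS1fin : S1.Finite := by
    refine Set.Finite.subset
      (Finset.finite_toSet (Fintype.piFinset (fun _ : Fin (k+1) => Finset.Icc (-m) m))) ?_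
    intro c hc
    rw [Finset.mem_coe, Fintype.mem_piFinset]
    intro i
    rw [Finset.mem_Icc]
    exact abs_le.mp (hc.1 i)
  have hS2fin : S2.Finite := by
    refine Set.Finite.subset
      (Finset.finite_toSet (Fintype.piFinset (fun _ : Fin (k+1) => Finset.Icc (-m) m))) ?_
    intro c hc
    rw [Finset.mem_coe, Fintype.mem_piFinset]
    intro i
    rw [Finset.mem_Icc]
    exact abs_le.mp (abs_c_le k t c hc.2.1 ht i)
  -- count S1
  have hS1card : (S1.ncard : ℝ) ≤ (5*t)^k := by
    have hinj : Set.InjOn (fun (c : Fin (k+1) → ℤ) => c ∘ Fin.castSucc) S1 := by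
      intro c hc c' hc' hcc
      funext i
      refine Fin.lastCases ?_ (fun j => ?_) i
      · rw [hc.2, hc'.2]
      · exact congrFun hcc j
    have himg : (fun (c : Fin (k+1) → ℤ) => c ∘ Fin.castSucc) '' S1 ⊆
        ↑(Fintype.piFinset (fun _ : Fin k => Finset.Icc (-m) m)) := by
      rintro _ ⟨c, hc, rfl⟩
      rw [Finset.mem_coe, Fintype.mem_piFinset]
      intro i
      rw [Finset.mem_Icc]
      exact abs_le.mp (hc.1 _)
    have h1 : S1.ncard ≤ (Fintype.piFinset (fun _ : Fin k => Finset.Icc (-m) m)).card := by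
      rw [← Set.ncard_image_of_injOn hinj, ← Set.ncard_coe_finset]
      exact Set.ncard_le_ncard himg (Finset.finite_toSet _)
    have h2 : ((Fintype.piFinset (fun _ : Fin k => Finset.Icc (-m) m)).card : ℝ) ≤ (5*t)^k := by
      rw [Fintype.card_piFinset]
      push_cast
      rw [Finset.prod_const, Finset.card_univ, Fintype.card_fin]
      refine pow_le_pow_left₀ (by positivity) ?_ k
      have hcc : ((Finset.Icc (-m) m).card : ℤ) = 2*m+1 := by
        rw [Int.card_Icc]; omega
      have hcc' : ((Finset.Icc (-m) m).card : ℝ) = 2*(m:ℝ)+1 := by exact_mod_cast hcc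
      rw [hcc']
      linarith
    calc (S1.ncard : ℝ) ≤ _ := by exact_mod_cast Nat.cast_le.mpr h1
      _ ≤ (5*t)^k := h2
  -- data for S2
  have hdata : ∀ c ∈ S2, ∃ x : (Fin k → ℤ) × ℤ[X] × ℤ[X],
      Function.Injective x.1 ∧ (∀ i, x.1 i ∈ Finset.Icc (0:ℤ) (2*k)) ∧
      (∀ i, (P k c).eval (x.1 i) ≠ 0) ∧ P k c = x.2.1 * x.2.2 ∧
      x.2.1.natDegree < k ∧ x.2.2.natDegree < k := by
    intro c hc
    obtain ⟨hc0, hcn, hdeg, hirr⟩ := hc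
    obtain ⟨g, h, hf, hg, hh⟩ := exists_factor k hk (P k c) hdeg hirr
    have hP0 : P k c ≠ 0 := by
      intro h0
      apply hc0
      refine P_inj k ?_
      rw [h0]
      simp [P]
    obtain ⟨e, he, hemem, hev⟩ := exists_points k (P k c) hP0 (natDegree_P_le k c)
    exact ⟨(e, g, h), he, hemem, hev, hf, hg, hh⟩
  choose! D hD1 hD2 hD3 hD4 hD5 hD6 using hdata
  have hinj2 : Set.InjOn (fun c => ((D c).1, fun i => (D c).2.1.eval ((D c).1 i),
      fun i => (D c).2.2.eval ((D c).1 i))) S2 := by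
    intro c hc c' hc' hΦ
    have he : (D c).1 = (D c').1 :=
      congrArg (fun p : (Fin k → ℤ) × (Fin k → ℤ) × (Fin k → ℤ) => p.1) hΦ
    have ha : (fun i => (D c).2.1.eval ((D c).1 i))
        = fun i => (D c').2.1.eval ((D c').1 i) :=
      congrArg (fun p : (Fin k → ℤ) × (Fin k → ℤ) × (Fin k → ℤ) => p.2.1) hΦ
    have hb : (fun i => (D c).2.2.eval ((D c).1 i))
        = fun i => (D c').2.2.eval ((D c').1 i) :=
      congrArg (fun p : (Fin k → ℤ) × (Fin k → ℤ) × (Fin k → ℤ) => p.2.2) hΦ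
    have hg : (D c).2.1 = (D c').2.1 := by
      refine eval_determines k _ _ (hD5 c hc) (hD5 c' hc') (D c).1 (hD1 c hc) (fun i => ?_)
      have h1 : (D c).2.1.eval ((D c).1 i) = (D c').2.1.eval ((D c').1 i) := congrFun ha i
      rw [h1, he]
    have hh : (D c).2.2 = (D c').2.2 := by
      refine eval_determines k _ _ (hD6 c hc) (hD6 c' hc') (D c).1 (hD1 c hc) (fun i => ?_)
      have h1 : (D c).2.2.eval ((D c).1 i) = (D c').2.2.eval ((D c').1 i) := congrFun hb i
      rw [h1, he]
    refine P_inj k ?_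
    rw [hD4 c hc, hD4 c' hc', hg, hh]
  have himg2 : (fun c => ((D c).1, fun i => (D c).2.1.eval ((D c).1 i),
      fun i => (D c).2.2.eval ((D c).1 i))) '' S2 ⊆
      ↑(Fintype.piFinset (fun _ : Fin k => Finset.Icc (0:ℤ) (2*k)) ×ˢ
      ((Fintype.piFinset (fun _ : Fin k => (Finset.Icc (-N) N).erase 0)).biUnion
        (fun a => {a} ×ˢ Fintype.piFinset
          (fun i : Fin k => Finset.Icc (-(N / |a i|)) (N / |a i|))))) := by
    rintro _ ⟨c, hc, rfl⟩
    have hcn := hc.2.1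
    have hbound : ∀ i, |(D c).2.1.eval ((D c).1 i)| * |(D c).2.2.eval ((D c).1 i)| ≤ N ∧
        (D c).2.1.eval ((D c).1 i) ≠ 0 ∧ (D c).2.2.eval ((D c).1 i) ≠ 0 := by
      intro i
      have hev := eval_bound k hk t ht c hcn ((D c).1 i) (hD2 c hc i)
      rw [hD4 c hc, eval_mul, abs_mul] at hev
      have hne := hD3 c hc i
      rw [hD4 c hc, eval_mul] at hne
      have h1 : (D c).2.1.eval ((D c).1 i) ≠ 0 := fun h => hne (by rw [h, zero_mul])
      have h2 : (D c).2.2.eval ((D c).1 i) ≠ 0 := fun h => hne (by rw [h, mul_zero])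
      exact ⟨hev, h1, h2⟩
    rw [Finset.mem_coe, Finset.mem_product]
    constructor
    · rw [Fintype.mem_piFinset]
      exact fun i => hD2 c hc i
    · rw [Finset.mem_biUnion]
      refine ⟨fun i => (D c).2.1.eval ((D c).1 i), ?_, ?_⟩
      · rw [Fintype.mem_piFinset]
        intro i
        obtain ⟨hab, h1, h2⟩ := hbound i
        rw [Finset.mem_erase, Finset.mem_Icc, ← abs_le]
        refine ⟨h1, ?_⟩
        have hb1 : (1:ℤ) ≤ |(D c).2.2.eval ((D c).1 i)| := Int.one_le_abs h2
        nlinarith [abs_nonneg ((D c).2.1.eval ((D c).1 i))]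
      · rw [Finset.mem_product]
        refine ⟨Finset.mem_singleton_self _, ?_⟩
        rw [Fintype.mem_piFinset]
        intro i
        obtain ⟨hab, h1, h2⟩ := hbound i
        rw [Finset.mem_Icc, ← abs_le]
        rw [Int.le_ediv_iff_mul_le (abs_pos.mpr h1)]
        calc |(D c).2.2.eval ((D c).1 i)| * |(D c).2.1.eval ((D c).1 i)|
            = |(D c).2.1.eval ((D c).1 i)| * |(D c).2.2.eval ((D c).1 i)| := mul_comm _ _
          _ ≤ N := hab
  have hS2card : (S2.ncard : ℝ) ≤ (2*(k:ℝ)+1)^k * (6*(N:ℝ)*(1 + Real.log N))^k := by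
    have h1 : S2.ncard ≤ (Fintype.piFinset (fun _ : Fin k => Finset.Icc (0:ℤ) (2*k)) ×ˢ
      ((Fintype.piFinset (fun _ : Fin k => (Finset.Icc (-N) N).erase 0)).biUnion
        (fun a => {a} ×ˢ Fintype.piFinset
          (fun i : Fin k => Finset.Icc (-(N / |a i|)) (N / |a i|))))).card := by
      rw [← Set.ncard_image_of_injOn hinj2, ← Set.ncard_coe_finset]
      exact Set.ncard_le_ncard himg2 (Finset.finite_toSet _)
    calc (S2.ncard : ℝ) ≤ _ := by exact_mod_cast Nat.cast_le.mpr h1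
      _ ≤ _ := card_F_le k N hN1
  -- put it together
  have hmain : (Set.ncard {c : Fin (k + 1) → ℤ | c ≠ 0 ∧ (∑ i, ((c i : ℝ)) ^ 2) ≤ t ^ 2 ∧
        ((∑ i : Fin (k + 1), Polynomial.C (c i) * Polynomial.X ^ (i : ℕ)).natDegree < k ∨
          ¬ Irreducible ((∑ i : Fin (k + 1), Polynomial.C (c i) * Polynomial.X ^ (i : ℕ)).map
            (Int.castRingHom ℚ)))} : ℝ) ≤ (S1.ncard : ℝ) + (S2.ncard : ℝ) := by
    have h1 := Set.ncard_le_ncard hsub (hS1fin.union hS2fin)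
    have h2 := Set.ncard_union_le S1 S2
    exact_mod_cast Nat.cast_le.mpr (le_trans h1 h2)
  have hS2final : (S2.ncard : ℝ) ≤
      ((2*(k:ℝ)+1)^k * (12*(M:ℝ)*(1+Real.log (2*(M:ℝ))))^k) * ((1+(k:ℝ)/ε)^k)
        * (t^k * t ^ ε) :=
    hS2card.trans (analytic_bound k hk ε hε (M:ℝ) hMr1 t ht (N:ℝ) hNr1 hNle)
  have hS1final : (S1.ncard : ℝ) ≤ 5^k * (t^k * t ^ ε) :=
    hS1card.trans (five_bound k t (t ^ ε) ht htpow1)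
  have hrpow : t ^ ((k:ℝ) + ε) = t^k * t ^ ε := by
    rw [Real.rpow_add ht0, Real.rpow_natCast]
  rw [hrpow]
  calc _ ≤ (S1.ncard : ℝ) + (S2.ncard : ℝ) := hmain
    _ ≤ 5^k * (t^k * t ^ ε) +
        ((2*(k:ℝ)+1)^k * (12*(M:ℝ)*(1+Real.log (2*(M:ℝ))))^k) * ((1+(k:ℝ)/ε)^k)
          * (t^k * t ^ ε) := add_le_add hS1final hS2final
    _ = (5^k + ((2*(k:ℝ)+1)^k * (12*(M:ℝ)*(1+Real.log (2*(M:ℝ))))^k) * ((1+(k:ℝ)/ε)^k))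
          * (t^k * t ^ ε) := by ring
end
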